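/- If X is countably compact and A ⊆ C_p(X) is such that every infinite subset of A has a limit point in C_p(X), then the closure of A in C_p(X) is compact (Grothendieck's theorem). -/

import Mathlib

open Set Filter Topology TopologicalSpace

universe u

/-- `C_p(X)`: continuous real-valued functions on `X` with the topology of pointwise
convergence (subspace of `X → ℝ` with the product topology). -/
abbrev Cp (X : Type*) [TopologicalSpace X] : Type _ := {f : X → ℝ // Continuous f}

/-- A space is realcompact if it embeds as a closed subspace of a power of `ℝ`. -/
def Realcompact (X : Type u) [TopologicalSpace X] : Prop :=
  ∃ (I : Type u) (f : X → I → ℝ), IsClosedEmbedding f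

/-- `Y` is countably compact in `X`: every infinite subset of `Y` has a limit
(accumulation) point in `X`. -/
def CountablyCompactIn {X : Type*} [TopologicalSpace X] (Y : Set X) : Prop :=
  ∀ A ⊆ Y, A.Infinite → ∃ x : X, AccPt x (𝓟 A)

/-- A space is countably compact: every countable open cover has a finite subcover. -/
def CountablyCompact (X : Type*) [TopologicalSpace X] : Prop :=
  ∀ U : ℕ → Set X, (∀ n, IsOpen (U n)) → (⋃ n, U n) = univ →
    ∃ t : Finset ℕ, (⋃ n ∈ t, U n) = univ

/-- A space is countably tight if every point in the closure of a set is in the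
closure of a countable subset. -/
def CountablyTight (X : Type*) [TopologicalSpace X] : Prop :=
  ∀ (A : Set X) (x : X), x ∈ closure A → ∃ B ⊆ A, B.Countable ∧ x ∈ closure B

/-- Property wD: for every countably infinite closed discrete subspace `{d n}` there is an
infinite `S ⊆ ℕ` and a discrete family of open sets `U n` (`n ∈ S`) with `d n ∈ U n`. -/
def WD (X : Type*) [TopologicalSpace X] : Prop :=
  ∀ d : ℕ → X, Function.Injective d → IsClosed (Set.range d) →
    DiscreteTopology (Set.range d) →
    ∃ (S : Set ℕ) (U : ℕ → Set X), S.Infinite ∧ (∀ n ∈ S, IsOpen (U n)) ∧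
      (∀ n ∈ S, d n ∈ U n) ∧
      ∀ x : X, ∃ V ∈ 𝓝 x, {n | n ∈ S ∧ (V ∩ U n).Nonempty}.Subsingleton

/-- `N` is a network for `X`. -/
def IsNetwork {X : Type*} [TopologicalSpace X] (N : Set (Set X)) : Prop :=
  ∀ (x : X) (U : Set X), IsOpen U → x ∈ U → ∃ A ∈ N, x ∈ A ∧ A ⊆ U

lemma accPt_principal_mono {Z : Type*} [TopologicalSpace Z] {x : Z} {S T : Set Z}
    (hST : S ⊆ T) (h : AccPt x (𝓟 S)) : AccPt x (𝓟 T) :=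
  Filter.NeBot.mono h (inf_le_inf_left _ (principal_mono.2 hST))

lemma isClosed_of_no_accPt {Z : Type*} [TopologicalSpace Z] {T : Set Z}
    (h : ∀ x, ¬ AccPt x (𝓟 T)) : IsClosed T := by
  rw [← closure_subset_iff_isClosed]
  intro x hx
  by_contra hxT
  refine h x (accPt_iff_nhds.2 fun U hU => ?_)
  obtain ⟨y, hy1, hy2⟩ := mem_closure_iff_nhds.1 hx U hU
  exact ⟨y, ⟨hy1, hy2⟩, fun hxy => hxT (hxy ▸ hy2)⟩

lemma cc_accPt {Z : Type*} [TopologicalSpace Z] [T1Space Z] (hZ : CountablyCompact Z)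
    (S : Set Z) (hc : S.Countable) (hi : S.Infinite) : ∃ x, AccPt x (𝓟 S) := by
  by_contra hno
  push_neg at hno
  haveI : Countable S := hc.to_subtype
  haveI : Infinite S := hi.to_subtype
  obtain ⟨d⟩ := nonempty_denumerable S
  let e : ℕ ≃ S := (Denumerable.eqv S).symm
  let s : ℕ → Z := fun n => (e n : Z)
  have hs_inj : Function.Injective s := fun a b hab => e.injective (Subtype.ext hab)
  have hclosed : ∀ T ⊆ S, IsClosed T := fun T hT =>
    isClosed_of_no_accPt fun x hx => hno x (accPt_principal_mono hT hx)
  obtain ⟨t, ht⟩ := hZ (fun n => (S \ {s n})ᶜ)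
    (fun n => (hclosed _ diff_subset).isOpen_compl)
    (by
      ext z
      simp only [mem_iUnion, mem_univ, iff_true, mem_compl_iff, mem_diff,
        mem_singleton_iff, not_and, not_not]
      by_cases hz : z ∈ S
      · exact ⟨e.symm ⟨z, hz⟩, fun _ => by simp [s]⟩
      · exact ⟨0, fun hzS => absurd hzS hz⟩)
  set m := (t.sup id) + 1 with hm
  have hsm : s m ∈ (⋃ n ∈ t, (S \ {s n})ᶜ) := ht ▸ mem_univ _
  simp only [mem_iUnion, mem_compl_iff, mem_diff, mem_singleton_iff, not_and, not_not] at hsm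
  obtain ⟨n, hnt, hn⟩ := hsm
  have : s m = s n := hn (e m).2
  have hmn : m = n := hs_inj this
  have : m ≤ t.sup id := hmn ▸ Finset.le_sup (f := id) hnt
  omega

lemma accPt_mem_closure_tail {Z : Type*} [TopologicalSpace Z] [T1Space Z]
    {u : ℕ → Z} {p : Z} (h : AccPt p (𝓟 (Set.range u))) (k : ℕ) :
    p ∈ closure (u '' Set.Ici k) := by
  rw [mem_closure_iff_nhds]
  intro U hU
  have hTfin : ((u '' Set.Iio k) \ {p}).Finite := ((Set.finite_Iio k).image u).diff
  have hUp : U ∩ ((u '' Set.Iio k) \ {p})ᶜ ∈ 𝓝 p :=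
    inter_mem hU (hTfin.isClosed.isOpen_compl.mem_nhds (by simp))
  obtain ⟨y, ⟨⟨hyU, hyT⟩, hyR⟩, hyp⟩ := accPt_iff_nhds.1 h _ hUp
  obtain ⟨n, rfl⟩ := hyR
  rcases lt_or_ge n k with hn | hn
  · exact absurd ⟨mem_image_of_mem u hn, hyp⟩ hyT
  · exact ⟨u n, hyU, mem_image_of_mem u hn⟩

lemma exists_infinite_fiber_of_range_finite {α : Type*} {u : ℕ → α}
    (h : (Set.range u).Finite) : ∃ a, {n | u n = a}.Infinite := by
  by_contra hc
  push_neg at hc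
  have hsub : (Set.univ : Set ℕ) ⊆ ⋃ a ∈ Set.range u, {n | u n = a} := fun n _ =>
    Set.mem_biUnion (Set.mem_range_self n) rfl
  exact Set.infinite_univ ((h.biUnion fun a _ => hc a).subset hsub)

lemma closure_pi_approx {X : Type*} (SS : Set (X → ℝ)) {g : X → ℝ}
    (hg : g ∈ closure SS) (s : Finset X) {δ : ℝ} (hδ : 0 < δ) :
    ∃ u ∈ SS, ∀ z ∈ s, dist (u z) (g z) < δ := by
  have hV : {u : X → ℝ | ∀ z ∈ s, dist (u z) (g z) < δ} ∈ 𝓝 g := by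
    have heq : {u : X → ℝ | ∀ z ∈ s, dist (u z) (g z) < δ}
        = ⋂ z ∈ s, (fun u : X → ℝ => u z) ⁻¹' Metric.ball (g z) δ := by
      ext u; simp [Metric.mem_ball]
    rw [heq]
    exact (Filter.biInter_finset_mem s).2 fun z _ =>
      (Metric.isOpen_ball.preimage (continuous_apply z)).mem_nhds (by simp [Metric.mem_ball, hδ])
  obtain ⟨u, hu1, hu2⟩ := mem_closure_iff_nhds.1 hg _ hV
  exact ⟨u, hu2, hu1⟩

noncomputable def povBuild {α : Type*} (P : (ℕ → α) → ℕ → Prop) (l0 : ℕ → α)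
    (H : ∀ n (l : ℕ → α), (∀ i < n, P l i) → {p : α // ∀ i ≤ n, P (Function.update l n p) i}) :
    (n : ℕ) → {l : ℕ → α // ∀ i ≤ n, P l i}
  | 0 => ⟨Function.update l0 0 (H 0 l0 (fun i hi => absurd hi (Nat.not_lt_zero i))).1,
      (H 0 l0 (fun i hi => absurd hi (Nat.not_lt_zero i))).2⟩
  | (n+1) => ⟨Function.update (povBuild P l0 H n).1 (n+1)
      (H (n+1) (povBuild P l0 H n).1
        (fun i hi => (povBuild P l0 H n).2 i (Nat.lt_succ_iff.1 hi))).1,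
      (H (n+1) (povBuild P l0 H n).1
        (fun i hi => (povBuild P l0 H n).2 i (Nat.lt_succ_iff.1 hi))).2⟩

lemma povBuild_agree {α : Type*} (P : (ℕ → α) → ℕ → Prop) (l0 : ℕ → α)
    (H : ∀ n (l : ℕ → α), (∀ i < n, P l i) → {p : α // ∀ i ≤ n, P (Function.update l n p) i})
    (n i : ℕ) (hi : i ≤ n) :
    (povBuild P l0 H (n+1)).1 i = (povBuild P l0 H n).1 i := by
  simp only [povBuild]
  exact Function.update_of_ne (by omega) _ _

lemma povBuild_mono {α : Type*} (P : (ℕ → α) → ℕ → Prop) (l0 : ℕ → α)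
    (H : ∀ n (l : ℕ → α), (∀ i < n, P l i) → {p : α // ∀ i ≤ n, P (Function.update l n p) i}) :
    ∀ (m n : ℕ), n ≤ m → (povBuild P l0 H m).1 n = (povBuild P l0 H n).1 n := by
  intro m
  induction m with
  | zero => intro n hn; rw [Nat.le_zero.1 hn]
  | succ m ih =>
      intro n hn
      rcases eq_or_lt_of_le hn with rfl | h
      · rfl
      · rw [povBuild_agree P l0 H m n (Nat.lt_succ_iff.1 h), ih n (Nat.lt_succ_iff.1 h)]

/-- Existence of a sequence whose every entry satisfies the "course-of-values" condition. -/
lemma povExists {α : Type*} (P : (ℕ → α) → ℕ → Prop) (l0 : ℕ → α)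
    (hcongr : ∀ (l l' : ℕ → α) (i : ℕ), (∀ j ≤ i, l' j = l j) → P l i → P l' i)
    (H : ∀ n (l : ℕ → α), (∀ i < n, P l i) → ∃ p, ∀ i ≤ n, P (Function.update l n p) i) :
    ∃ l : ℕ → α, ∀ i, P l i := by
  classical
  set H' : ∀ n (l : ℕ → α), (∀ i < n, P l i) → {p : α // ∀ i ≤ n, P (Function.update l n p) i} :=
    fun n l hl => ⟨(H n l hl).choose, (H n l hl).choose_spec⟩ with hH'
  refine ⟨fun n => (povBuild P l0 H' n).1 n, fun i => ?_⟩
  have hP : P (povBuild P l0 H' i).1 i := (povBuild P l0 H' i).2 i le_rfl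
  exact hcongr _ _ i (fun j hj => (povBuild_mono P l0 H' i j hj).symm) hP

section GrCond

variable {X : Type*} [TopologicalSpace X]

def GrCond (A : Set (Cp X)) (g : X → ℝ) (x₀ : X) (ε : ℝ)
    (l : ℕ → Cp X × X) (i : ℕ) : Prop :=
  (l i).1 ∈ A ∧ dist ((l i).1.1 x₀) (g x₀) < 1 / ((i : ℝ) + 1) ∧
  (∀ j < i, dist ((l i).1.1 ((l j).2)) (g ((l j).2)) < 1 / ((i : ℝ) + 1)) ∧
  (∀ j ≤ i, dist ((l j).1.1 ((l i).2)) ((l j).1.1 x₀) < ε / 4) ∧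
  ε ≤ dist (g ((l i).2)) (g x₀)

lemma GrCond_congr {A : Set (Cp X)} {g : X → ℝ} {x₀ : X} {ε : ℝ}
    {l l' : ℕ → Cp X × X} {i : ℕ}
    (hagree : ∀ j ≤ i, l' j = l j) (h : GrCond A g x₀ ε l i) : GrCond A g x₀ ε l' i := by
  obtain ⟨h1, h2, h3, h4, h5⟩ := h
  refine ⟨?_, ?_, ?_, ?_, ?_⟩
  · rw [hagree i le_rfl]; exact h1
  · rw [hagree i le_rfl]; exact h2
  · intro j hj; rw [hagree i le_rfl, hagree j hj.le]; exact h3 j hj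
  · intro j hj; rw [hagree j hj, hagree i le_rfl]; exact h4 j hj
  · rw [hagree i le_rfl]; exact h5

lemma gr_step {A : Set (Cp X)} {g : X → ℝ}
    (hg : g ∈ closure (Subtype.val '' A)) {x₀ : X} {ε : ℝ} (hε : 0 < ε)
    (hdis : ∀ U ∈ 𝓝 x₀, ∃ z ∈ U, ε ≤ dist (g z) (g x₀))
    (n : ℕ) (l : ℕ → Cp X × X) (hl : ∀ i < n, GrCond A g x₀ ε l i) :
    ∃ p : Cp X × X, ∀ i ≤ n, GrCond A g x₀ ε (Function.update l n p) i := by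
  classical
  have hδ : (0:ℝ) < 1 / ((n : ℝ) + 1) := by positivity
  obtain ⟨u, huA, hu⟩ := closure_pi_approx _ hg
      (insert x₀ ((Finset.range n).image fun j => (l j).2)) hδ
  obtain ⟨f, hfA, rfl⟩ := huA
  have hbmem : ∀ (φ : Cp X), {z | dist (φ.1 z) (φ.1 x₀) < ε / 4} ∈ 𝓝 x₀ := by
    intro φ
    have heq : {z | dist (φ.1 z) (φ.1 x₀) < ε / 4}
        = φ.1 ⁻¹' Metric.ball (φ.1 x₀) (ε / 4) := by
      ext z; simp [Metric.mem_ball]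
    rw [heq]
    refine (Metric.isOpen_ball.preimage φ.2).mem_nhds ?_
    simp only [Set.mem_preimage, Metric.mem_ball, dist_self]
    linarith
  obtain ⟨z, hzU, hz⟩ := hdis _ (inter_mem (hbmem f)
    ((Filter.biInter_finset_mem (Finset.range n)).2 fun j _ => hbmem (l j).1))
  have hzU2 : ∀ j < n, dist ((l j).1.1 z) ((l j).1.1 x₀) < ε / 4 := by
    intro j hj
    have := hzU.2
    rw [Set.mem_iInter₂] at this
    exact this j (Finset.mem_range.2 hj)
  refine ⟨(f, z), fun i hi => ?_⟩
  rcases lt_or_eq_of_le hi with hi | rfl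
  · exact GrCond_congr (fun j hj => Function.update_of_ne (by omega) _ _) (hl i hi)
  · refine ⟨?_, ?_, ?_, ?_, ?_⟩ <;> simp only [Function.update_self]
    · exact hfA
    · exact hu x₀ (Finset.mem_insert_self _ _)
    · intro j hj
      rw [Function.update_of_ne (by omega : j ≠ i)]
      exact hu (l j).2 (Finset.mem_insert_of_mem
        (Finset.mem_image_of_mem _ (Finset.mem_range.2 hj)))
    · intro j hj
      rcases eq_or_lt_of_le hj with rfl | hj
      · rw [Function.update_self]; exact hzU.1
      · rw [Function.update_of_ne (by omega : j ≠ i)]; exact hzU2 j hj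
    · exact hz

lemma gr_construct {A : Set (Cp X)} {g : X → ℝ}
    (hg : g ∈ closure (Subtype.val '' A)) {x₀ : X} {ε : ℝ} (hε : 0 < ε)
    (hdis : ∀ U ∈ 𝓝 x₀, ∃ z ∈ U, ε ≤ dist (g z) (g x₀)) :
    ∃ (F : ℕ → Cp X) (Y : ℕ → X),
      (∀ n, F n ∈ A) ∧
      (∀ n : ℕ, dist ((F n).1 x₀) (g x₀) < 1 / ((n : ℝ) + 1)) ∧
      (∀ i n : ℕ, i < n → dist ((F n).1 (Y i)) (g (Y i)) < 1 / ((n : ℝ) + 1)) ∧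
      (∀ j n : ℕ, j ≤ n → dist ((F j).1 (Y n)) ((F j).1 x₀) < ε / 4) ∧
      (∀ n, ε ≤ dist (g (Y n)) (g x₀)) := by
  classical
  have hne : (Subtype.val '' A).Nonempty := by
    by_contra hemp
    rw [Set.not_nonempty_iff_eq_empty] at hemp
    rw [hemp, closure_empty] at hg
    exact hg
  obtain ⟨u0, f0, hf0A, rfl⟩ := hne
  obtain ⟨l, hl⟩ := povExists (GrCond A g x₀ ε) (fun _ => (f0, x₀))
    (fun l l' i hag h => GrCond_congr hag h)
    (gr_step hg hε hdis)
  exact ⟨fun n => (l n).1, fun n => (l n).2, fun n => (hl n).1, fun n => (hl n).2.1,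
    fun i n hin => (hl n).2.2.1 i hin, fun j n hjn => (hl n).2.2.2.1 j hjn,
    fun n => (hl n).2.2.2.2⟩

end GrCond

lemma one_div_succ_le {k n : ℕ} (h : k ≤ n) : 1 / ((n : ℝ) + 1) ≤ 1 / ((k : ℝ) + 1) := by
  have : (k:ℝ) + 1 ≤ (n:ℝ) + 1 := by exact_mod_cast Nat.succ_le_succ h
  apply one_div_le_one_div_of_le <;> [positivity; exact this]

lemma gr_closure_continuous {X : Type*} [TopologicalSpace X] [T2Space X]
    (hX : CountablyCompact X) (A : Set (Cp X))
    (hA : ∀ B ⊆ A, B.Infinite → ∃ f : Cp X, AccPt f (𝓟 B))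
    {g : X → ℝ} (hg : g ∈ closure (Subtype.val '' A)) : Continuous g := by
  classical
  rw [continuous_iff_continuousAt]
  by_contra hc
  push_neg at hc
  obtain ⟨x₀, hx₀⟩ := hc
  have hdis : ∃ ε > (0:ℝ), ∀ U ∈ 𝓝 x₀, ∃ z ∈ U, ε ≤ dist (g z) (g x₀) := by
    rw [ContinuousAt, Metric.tendsto_nhds] at hx₀
    push_neg at hx₀
    obtain ⟨ε, hε, hfreq⟩ := hx₀
    refine ⟨ε, hε, fun U hU => ?_⟩
    obtain ⟨z, hzU, hz⟩ := Filter.frequently_iff.1 hfreq hU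
    exact ⟨z, hzU, hz⟩
  obtain ⟨ε, hε, hdis⟩ := hdis
  obtain ⟨F, Y, c1, c2, c3, c4, c5⟩ := gr_construct hg hε hdis
  by_cases hBfin : (Set.range F).Finite
  · -- finitely many functions: one repeats infinitely often
    obtain ⟨f, hf⟩ := exists_infinite_fiber_of_range_finite hBfin
    have hfx₀ : f.1 x₀ = g x₀ := by
      refine eq_of_forall_dist_le fun δ hδ => ?_
      obtain ⟨k, hk⟩ := exists_nat_one_div_lt hδ
      obtain ⟨n, hn, hkn⟩ := hf.exists_gt k
      have h2 := c2 n
      rw [show F n = f from hn] at h2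
      exact le_of_lt (lt_of_lt_of_le h2 (le_trans (one_div_succ_le hkn.le) hk.le))
    obtain ⟨n₀, hn₀⟩ := hf.nonempty
    have hfY : f.1 (Y n₀) = g (Y n₀) := by
      refine eq_of_forall_dist_le fun δ hδ => ?_
      obtain ⟨k, hk⟩ := exists_nat_one_div_lt hδ
      obtain ⟨n, hn, hkn⟩ := hf.exists_gt (max k n₀)
      have h3 := c3 n₀ n (lt_of_le_of_lt (le_max_right _ _) hkn)
      rw [show F n = f from hn] at h3
      exact le_of_lt (lt_of_lt_of_le h3
        (le_trans (one_div_succ_le (le_trans (le_max_left _ _) hkn.le)) hk.le))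
    have h4 := c4 n₀ n₀ le_rfl
    rw [show F n₀ = f from hn₀, hfY, hfx₀] at h4
    have h5 := c5 n₀
    linarith
  · obtain ⟨h, hh⟩ := hA (Set.range F) (Set.range_subset_iff.2 c1) hBfin
    by_cases hYfin : (Set.range Y).Finite
    · -- finitely many points: one repeats infinitely often
      obtain ⟨z, hz⟩ := exists_infinite_fiber_of_range_finite hYfin
      obtain ⟨m₀, hm₀⟩ := hz.nonempty
      have hlow : ε ≤ dist (g z) (g x₀) := by
        have := c5 m₀; rw [show Y m₀ = z from hm₀] at this; exact this
      obtain ⟨k, hk⟩ := exists_nat_one_div_lt (show (0:ℝ) < 3 * ε / 8 by linarith)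
      set n := max (m₀ + 1) k with hn
      obtain ⟨i, hi, hni⟩ := hz.exists_gt n
      have h4 := c4 n i hni.le
      rw [show Y i = z from hi] at h4
      have h3 := c3 m₀ n (by omega)
      rw [show Y m₀ = z from hm₀] at h3
      have h2 := c2 n
      have hsmall : 1 / ((n : ℝ) + 1) < 3 * ε / 8 :=
        lt_of_le_of_lt (one_div_succ_le (le_max_right _ _)) hk
      have htri : dist (g z) (g x₀) ≤ dist (g z) ((F n).1 z) + dist ((F n).1 z) ((F n).1 x₀)
          + dist ((F n).1 x₀) (g x₀) := dist_triangle4 _ _ _ _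
      rw [dist_comm (g z) ((F n).1 z)] at htri
      linarith
    · -- both infinite: use an accumulation point y in X
      obtain ⟨y, hy⟩ := cc_accPt hX (Set.range Y) (Set.countable_range Y) hYfin
      have key : ∀ (w : X) (k0 : ℕ),
          (∀ n : ℕ, k0 ≤ n → dist ((F n).1 w) (g w) < 1 / ((n : ℝ) + 1)) → h.1 w = g w := by
        intro w k0 hw
        refine eq_of_forall_dist_le fun δ hδ => ?_
        obtain ⟨k, hk⟩ := exists_nat_one_div_lt hδ
        set K := max k k0 with hK
        have hcl : h ∈ closure (F '' Set.Ici K) := accPt_mem_closure_tail hh K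
        have hmem : h.1 w ∈ closure ((fun f : Cp X => f.1 w) '' (F '' Set.Ici K)) :=
          mem_closure_image (((continuous_apply w).comp continuous_subtype_val).continuousAt) hcl
        have hsub : (fun f : Cp X => f.1 w) '' (F '' Set.Ici K)
            ⊆ Metric.closedBall (g w) (1 / ((K : ℝ) + 1)) := by
          rintro t ⟨f', ⟨n, hn, rfl⟩, rfl⟩
          exact Metric.mem_closedBall.2 (le_trans
            (le_of_lt (hw n (le_trans (le_max_right _ _) hn)))
            (one_div_succ_le hn))
        have := closure_minimal hsub Metric.isClosed_closedBall hmem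
        rw [Metric.mem_closedBall] at this
        exact le_trans this (le_trans (one_div_succ_le (le_max_left _ _)) hk.le)
      have hhx₀ : h.1 x₀ = g x₀ := key x₀ 0 (fun n _ => c2 n)
      have hhY : ∀ m, h.1 (Y m) = g (Y m) := fun m => key (Y m) (m + 1) (fun n hn => c3 m n hn)
      -- lower bound
      have hyc : y ∈ closure (Set.range Y) :=
        mem_closure_iff_clusterPt.2 (AccPt.clusterPt hy)
      have hmem : h.1 y ∈ closure (h.1 '' Set.range Y) :=
        mem_closure_image (h.2.continuousAt) hyc
      have hsub : h.1 '' Set.range Y ⊆ {t : ℝ | ε ≤ dist t (g x₀)} := by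
        rintro t ⟨w, ⟨m, rfl⟩, rfl⟩
        rw [Set.mem_setOf_eq, hhY m]
        exact c5 m
      have hClow : IsClosed {t : ℝ | ε ≤ dist t (g x₀)} :=
        IsClosed.preimage (Continuous.dist continuous_id continuous_const) isClosed_Ici
      have hlow : ε ≤ dist (h.1 y) (g x₀) := closure_minimal hsub hClow hmem
      rw [← hhx₀] at hlow
      -- upper bound
      have hFy : ∀ j : ℕ, dist ((F j).1 y) ((F j).1 x₀) ≤ ε / 4 := by
        intro j
        have hycl : y ∈ closure (Y '' Set.Ici j) := accPt_mem_closure_tail hy j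
        have hmem2 : (F j).1 y ∈ closure ((F j).1 '' (Y '' Set.Ici j)) :=
          mem_closure_image ((F j).2.continuousAt) hycl
        have hsub2 : (F j).1 '' (Y '' Set.Ici j) ⊆ Metric.closedBall ((F j).1 x₀) (ε / 4) := by
          rintro t ⟨w, ⟨m, hm, rfl⟩, rfl⟩
          exact Metric.mem_closedBall.2 (le_of_lt (c4 j m hm))
        have := closure_minimal hsub2 Metric.isClosed_closedBall hmem2
        rwa [Metric.mem_closedBall] at this
      have hclF : h ∈ closure (Set.range F) :=
        mem_closure_iff_clusterPt.2 (AccPt.clusterPt hh)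
      have hφ : Continuous (fun f : Cp X => (f.1 y, f.1 x₀)) :=
        Continuous.prodMk ((continuous_apply y).comp continuous_subtype_val)
          ((continuous_apply x₀).comp continuous_subtype_val)
      have hmem3 : (h.1 y, h.1 x₀) ∈ closure ((fun f : Cp X => (f.1 y, f.1 x₀)) '' Set.range F) :=
        mem_closure_image hφ.continuousAt hclF
      have hsub3 : (fun f : Cp X => (f.1 y, f.1 x₀)) '' Set.range F
          ⊆ {p : ℝ × ℝ | dist p.1 p.2 ≤ ε / 4} := by
        rintro t ⟨f', ⟨j, rfl⟩, rfl⟩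
        exact hFy j
      have hCup : IsClosed {p : ℝ × ℝ | dist p.1 p.2 ≤ ε / 4} :=
        IsClosed.preimage (Continuous.dist continuous_fst continuous_snd) isClosed_Iic
      have hup : dist (h.1 y) (h.1 x₀) ≤ ε / 4 := closure_minimal hsub3 hCup hmem3
      linarith

lemma gr_bounded {X : Type*} [TopologicalSpace X] (A : Set (Cp X))
    (hA : ∀ B ⊆ A, B.Infinite → ∃ f : Cp X, AccPt f (𝓟 B)) (x : X) :
    ∃ c : ℝ, ∀ f ∈ A, |f.1 x| ≤ c := by
  classical
  by_contra hc
  push_neg at hc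
  choose u huA hub using hc
  set v : ℕ → Cp X := fun n => u n with hv
  have hvb : ∀ n : ℕ, (n : ℝ) < |(v n).1 x| := fun n => hub n
  have hinf : (Set.range v).Infinite := by
    intro hfin
    obtain ⟨c, hcb⟩ := (hfin.image (fun f : Cp X => |f.1 x|)).bddAbove
    obtain ⟨n, hn⟩ := exists_nat_gt c
    exact absurd (hcb (Set.mem_image_of_mem _ (Set.mem_range_self n)))
      (not_le.2 (lt_trans hn (hvb n)))
  obtain ⟨h, hh⟩ := hA (Set.range v) (Set.range_subset_iff.2 fun n => huA (n : ℝ)) hinf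
  set c : ℝ := |h.1 x| + 1 with hcdef
  have hTfin : ((v '' Set.Iio (⌈c⌉₊)) \ {h}).Finite := (((Set.finite_Iio _).image v).diff)
  have hW : ((fun f : Cp X => f.1 x) ⁻¹' Metric.ball (h.1 x) 1)
      ∩ ((v '' Set.Iio (⌈c⌉₊)) \ {h})ᶜ ∈ 𝓝 h := by
    refine inter_mem ?_ (hTfin.isClosed.isOpen_compl.mem_nhds (by simp))
    exact (Metric.isOpen_ball.preimage
      ((continuous_apply x).comp continuous_subtype_val)).mem_nhds
      (by simp [Metric.mem_ball])
  obtain ⟨w, ⟨⟨hw1, hw2⟩, hwR⟩, hwne⟩ := accPt_iff_nhds.1 hh _ hW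
  obtain ⟨n, rfl⟩ := hwR
  rw [Set.mem_preimage, Metric.mem_ball, Real.dist_eq] at hw1
  have habs : |(v n).1 x| < c := by
    have : |(v n).1 x| ≤ |h.1 x| + |(v n).1 x - h.1 x| := by
      calc |(v n).1 x| = |h.1 x + ((v n).1 x - h.1 x)| := by ring_nf
        _ ≤ |h.1 x| + |(v n).1 x - h.1 x| := abs_add_le _ _
    linarith
  have hnc : n < ⌈c⌉₊ := Nat.lt_ceil.2 (lt_trans (hvb n) habs)
  exact hw2 ⟨Set.mem_image_of_mem v hnc, hwne⟩


theorem grothendieck_theorem {X : Type*} [TopologicalSpace X]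
    [CompletelyRegularSpace X] [T2Space X] (hX : CountablyCompact X)
    (A : Set (Cp X)) (hA : ∀ B ⊆ A, B.Infinite → ∃ f : Cp X, AccPt f (𝓟 B)) :
    IsCompact (closure A) := by
  classical
  choose c hc using fun x => gr_bounded A hA x
  set K := closure (Subtype.val '' A) with hK
  have hKsub : K ⊆ Set.pi univ (fun x => Icc (-(c x)) (c x)) := by
    refine closure_minimal ?_ (isClosed_set_pi fun x _ => isClosed_Icc)
    rintro u ⟨f, hfA, rfl⟩ x _
    have := hc x f hfA
    rw [abs_le] at this
    exact ⟨this.1, this.2⟩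
  have hKcomp : IsCompact K :=
    IsCompact.of_isClosed_subset (isCompact_univ_pi fun x => isCompact_Icc)
      isClosed_closure hKsub
  have hKrange : K ⊆ Set.range (Subtype.val : Cp X → (X → ℝ)) := fun u hu =>
    ⟨⟨u, gr_closure_continuous hX A hA hu⟩, rfl⟩
  have he : IsEmbedding (Subtype.val : Cp X → (X → ℝ)) := IsEmbedding.subtypeVal
  rw [he.isCompact_iff]
  have himg : Subtype.val '' closure A = K := by
    rw [he.closure_eq_preimage_closure_image A, Set.image_preimage_eq_inter_range]
    exact inter_eq_self_of_subset_left hKrange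
  rw [himg]
  exact hKcomp
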